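/- Let f : ℝ → ℝ be continuous, strictly increasing with f(0) = 0, F(t) = ∫₀ᵗ f(s) ds, h(t) = ∫₀ᵗ F(s)^(-1/2) ds finite for t ≥ 0, and assume lim_{t→0⁺} t·f(t)/F(t) = ω ∈ [1,2). Then lim_{t→0⁺} f(t)·h(t)/√(F(t)) = 2ω/(2-ω). -/

import Mathlib

open MeasureTheory Set Filter

/-- With `F t = ∫₀ᵗ f`, `h t = ∫₀ᵗ F(s)^{-1/2} ds` finite, and `t f(t)/F(t) → ω ∈ [1,2)`
as `t → 0⁺`, one has `f(t) h(t)/√(F t) → 2ω/(2-ω)`. -/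
theorem stmt2 (f F h : ℝ → ℝ) (hf_cont : Continuous f) (hf_mono : StrictMono f)
    (hf0 : f 0 = 0)
    (hF : ∀ t, F t = ∫ s in (0:ℝ)..t, f s)
    (hfin : ∀ t ≥ (0:ℝ), IntegrableOn (fun s => (F s) ^ (-(1:ℝ)/2)) (Set.Ioc 0 t) volume)
    (hh : ∀ t, h t = ∫ s in (0:ℝ)..t, (F s) ^ (-(1:ℝ)/2))
    (ω : ℝ) (hω : ω ∈ Set.Ico (1:ℝ) 2)
    (hlim : Tendsto (fun t => t * f t / F t) (nhdsWithin 0 (Set.Ioi 0)) (nhds ω)) :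
    Tendsto (fun t => f t * h t / Real.sqrt (F t)) (nhdsWithin 0 (Set.Ioi 0))
      (nhds (2 * ω / (2 - ω))) := by
  obtain ⟨hω1, hω2⟩ := hω
  have hFeq : F = fun u => ∫ x in (0:ℝ)..u, f x := funext hF
  have hheq : h = fun u => ∫ x in (0:ℝ)..u, (F x) ^ (-(1:ℝ)/2) := funext hh
  have hfpos : ∀ t : ℝ, 0 < t → 0 < f t := fun t ht => by
    simpa [hf0] using hf_mono ht
  have hFder : ∀ t : ℝ, HasDerivAt F (f t) t := by
    intro t
    rw [hFeq]
    exact intervalIntegral.integral_hasDerivAt_right (hf_cont.intervalIntegrable 0 t)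
      (hf_cont.stronglyMeasurableAtFilter _ _) hf_cont.continuousAt
  have hFcont : Continuous F := by
    have : Differentiable ℝ F := fun t => (hFder t).differentiableAt
    exact this.continuous
  have hFpos : ∀ t : ℝ, 0 < t → 0 < F t := by
    intro t ht
    rw [hF]
    exact intervalIntegral.intervalIntegral_pos_of_pos_on
      (hf_cont.intervalIntegrable 0 t) (fun x hx => hfpos x hx.1) ht
  -- continuity of the integrand of h on Ioi 0
  have hg0cont : ∀ t : ℝ, 0 < t → ContinuousAt (fun s => (F s) ^ (-(1:ℝ)/2)) t := by
    intro t ht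
    exact (Real.continuousAt_rpow_const (F t) _ (Or.inl (hFpos t ht).ne')).comp
      hFcont.continuousAt
  have hg0contOn : ContinuousOn (fun s => (F s) ^ (-(1:ℝ)/2)) (Ioi 0) :=
    fun t ht => (hg0cont t ht).continuousWithinAt
  have hint : ∀ t : ℝ, 0 ≤ t → IntervalIntegrable (fun s => (F s) ^ (-(1:ℝ)/2)) volume 0 t := by
    intro t ht
    rw [intervalIntegrable_iff_integrableOn_Ioc_of_le ht]
    exact hfin t ht
  -- derivative of h on Ioi 0
  have hhder : ∀ t : ℝ, 0 < t → HasDerivAt h ((F t) ^ (-(1:ℝ)/2)) t := by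
    intro t ht
    rw [hheq]
    exact intervalIntegral.integral_hasDerivAt_right (hint t ht.le)
      (ContinuousOn.stronglyMeasurableAtFilter isOpen_Ioi hg0contOn t ht)
      (hg0cont t ht)
  -- h tends to 0
  have hh0 : Tendsto h (nhdsWithin 0 (Set.Ioi 0)) (nhds 0) := by
    have hicc : IntegrableOn (fun s => (F s) ^ (-(1:ℝ)/2)) (Icc 0 1) volume := by
      rw [integrableOn_Icc_iff_integrableOn_Ioc]
      exact hfin 1 zero_le_one
    have hcprim := (intervalIntegral.continuousOn_primitive hicc).continuousWithinAt
      (left_mem_Icc.2 zero_le_one)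
    have h1 : Tendsto (fun x => ∫ s in Ioc 0 x, (F s) ^ (-(1:ℝ)/2)) (nhdsWithin 0 (Icc 0 1))
        (nhds 0) := by
      simpa [ContinuousWithinAt] using hcprim
    have h2 : Tendsto (fun x => ∫ s in Ioc 0 x, (F s) ^ (-(1:ℝ)/2)) (nhdsWithin 0 (Ioi 0))
        (nhds 0) := by
      refine h1.mono_left ?_
      rw [← nhdsWithin_Ioo_eq_nhdsGT (zero_lt_one : (0:ℝ) < 1)]
      exact nhdsWithin_mono _ (Ioo_subset_Icc_self)
    refine h2.congr' ?_
    filter_upwards [self_mem_nhdsWithin] with x hx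
    rw [hh, intervalIntegral.integral_of_le (le_of_lt hx)]
  -- choose ρ ∈ (ω, 2) and a bound F x ≥ K x^ρ near 0
  set ρ : ℝ := (ω + 2) / 2 with hρdef
  have hρ1 : ω < ρ := by rw [hρdef]; linarith
  have hρ2 : ρ < 2 := by rw [hρdef]; linarith
  have hρpos : 0 < ρ := by rw [hρdef]; linarith
  have hev : ∀ᶠ x in nhdsWithin 0 (Set.Ioi 0), x * f x / F x < ρ :=
    hlim.eventually_lt_const hρ1
  obtain ⟨b, hb, hbsub⟩ := mem_nhdsGT_iff_exists_Ioo_subset.1 hev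
  rw [mem_Ioi] at hb
  -- φ = F x * x^(-ρ) is antitone on Ioo 0 b
  have hφder : ∀ x ∈ Ioo (0:ℝ) b, HasDerivAt (fun x => F x * x ^ (-ρ))
      (f x * x ^ (-ρ) + F x * (1 * (-ρ) * x ^ (-ρ - 1))) x := by
    intro x hx
    exact (hFder x).mul ((hasDerivAt_id x).rpow_const (Or.inl hx.1.ne'))
  have hφanti : AntitoneOn (fun x => F x * x ^ (-ρ)) (Ioo 0 b) := by
    apply antitoneOn_of_deriv_nonpos (convex_Ioo 0 b)
    · exact fun x hx => ((hφder x hx).continuousAt).continuousWithinAt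
    · intro x hx
      rw [interior_Ioo] at hx
      exact (hφder x hx).differentiableAt.differentiableWithinAt
    · intro x hx
      rw [interior_Ioo] at hx
      rw [(hφder x hx).deriv]
      have hx0 : (0:ℝ) < x := hx.1
      have hfx : x * f x < ρ * F x := by
        have := hbsub hx
        rw [mem_setOf_eq, div_lt_iff₀ (hFpos x hx0)] at this
        linarith
      have hxp : x * x ^ (-ρ - 1) = x ^ (-ρ) := by
        nth_rewrite 1 [← Real.rpow_one x]
        rw [← Real.rpow_add hx0]
        norm_num
      have hxpow : (0:ℝ) < x ^ (-ρ - 1) := Real.rpow_pos_of_pos hx0 _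
      calc f x * x ^ (-ρ) + F x * (1 * (-ρ) * x ^ (-ρ - 1))
          = (x * f x - ρ * F x) * x ^ (-ρ - 1) := by rw [← hxp]; ring
        _ ≤ 0 := mul_nonpos_of_nonpos_of_nonneg (by linarith) hxpow.le
  set c : ℝ := b / 2 with hcdef
  have hc0 : 0 < c := by positivity
  have hcb : c < b := by rw [hcdef]; linarith
  set K : ℝ := F c * c ^ (-ρ) with hKdef
  have hK : 0 < K := mul_pos (hFpos c hc0) (Real.rpow_pos_of_pos hc0 _)
  have hFlow : ∀ x ∈ Ioo (0:ℝ) c, K * x ^ ρ ≤ F x := by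
    intro x hx
    have h1 : K ≤ F x * x ^ (-ρ) :=
      hφanti ⟨hx.1, hx.2.trans hcb⟩ ⟨hc0, hcb⟩ hx.2.le
    have hxρ : (0:ℝ) < x ^ ρ := Real.rpow_pos_of_pos hx.1 _
    have h2 : F x * x ^ (-ρ) * x ^ ρ = F x := by
      rw [mul_assoc, ← Real.rpow_add hx.1, neg_add_cancel, Real.rpow_zero, mul_one]
    calc K * x ^ ρ ≤ F x * x ^ (-ρ) * x ^ ρ := mul_le_mul_of_nonneg_right h1 hxρ.le
      _ = F x := h2
  -- the denominator g x = x * F x ^ (-1/2) tends to 0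
  have hg0 : Tendsto (fun x => x * (F x) ^ (-(1:ℝ)/2)) (nhdsWithin 0 (Set.Ioi 0)) (nhds 0) := by
    have hub : ∀ x ∈ Ioo (0:ℝ) c, x * (F x) ^ (-(1:ℝ)/2) ≤ K ^ (-(1:ℝ)/2) * x ^ (1 - ρ/2) := by
      intro x hx
      have hxρ : (0:ℝ) < K * x ^ ρ := mul_pos hK (Real.rpow_pos_of_pos hx.1 _)
      have hle : (F x) ^ (-(1:ℝ)/2) ≤ (K * x ^ ρ) ^ (-(1:ℝ)/2) := by
        have := Real.antitoneOn_rpow_Ioi_of_exponent_nonpos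
          (show -(1:ℝ)/2 ≤ 0 by norm_num) (mem_Ioi.2 hxρ)
          (mem_Ioi.2 ((hxρ.trans_le (hFlow x hx)))) (hFlow x hx)
        exact this
      have heq : x * (K * x ^ ρ) ^ (-(1:ℝ)/2) = K ^ (-(1:ℝ)/2) * x ^ (1 - ρ/2) := by
        rw [Real.mul_rpow hK.le (Real.rpow_pos_of_pos hx.1 _).le,
          ← Real.rpow_mul hx.1.le,
          show (1:ℝ) - ρ/2 = 1 + ρ * (-(1)/2) by ring, Real.rpow_add hx.1, Real.rpow_one]
        ring
      calc x * (F x) ^ (-(1:ℝ)/2) ≤ x * (K * x ^ ρ) ^ (-(1:ℝ)/2) :=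
            mul_le_mul_of_nonneg_left hle hx.1.le
        _ = K ^ (-(1:ℝ)/2) * x ^ (1 - ρ/2) := heq
    have hlbev : ∀ᶠ x in nhdsWithin 0 (Set.Ioi 0), 0 ≤ x * (F x) ^ (-(1:ℝ)/2) := by
      filter_upwards [self_mem_nhdsWithin] with x hx
      exact mul_nonneg (le_of_lt hx) (Real.rpow_pos_of_pos (hFpos x hx) _).le
    have hubev : ∀ᶠ x in nhdsWithin 0 (Set.Ioi 0),
        x * (F x) ^ (-(1:ℝ)/2) ≤ K ^ (-(1:ℝ)/2) * x ^ (1 - ρ/2) := by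
      filter_upwards [Ioo_mem_nhdsGT hc0] with x hx
      exact hub x hx
    have hexp : (0:ℝ) < 1 - ρ/2 := by linarith
    have htop : Tendsto (fun x : ℝ => K ^ (-(1:ℝ)/2) * x ^ (1 - ρ/2))
        (nhdsWithin 0 (Set.Ioi 0)) (nhds 0) := by
      have : Tendsto (fun x : ℝ => x ^ (1 - ρ/2)) (nhds 0) (nhds ((0:ℝ) ^ (1 - ρ/2))) :=
        (Real.continuousAt_rpow_const 0 _ (Or.inr hexp.le)).tendsto
      rw [Real.zero_rpow hexp.ne'] at this
      have h2 : Tendsto (fun x : ℝ => K ^ (-(1:ℝ)/2) * x ^ (1 - ρ/2))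
          (nhdsWithin 0 (Set.Ioi 0)) (nhds (K ^ (-(1:ℝ)/2) * 0)) :=
        (this.const_mul _).mono_left nhdsWithin_le_nhds
      simpa using h2
    exact tendsto_of_tendsto_of_tendsto_of_le_of_le' tendsto_const_nhds htop hlbev hubev
  -- L'Hôpital: h x / (x * F x ^ (-1/2)) → 2/(2-ω)
  have hlhop : Tendsto (fun x => h x / (x * (F x) ^ (-(1:ℝ)/2)))
      (nhdsWithin 0 (Set.Ioi 0)) (nhds (2 / (2 - ω))) := by
    have hev2 : ∀ᶠ x in nhdsWithin 0 (Set.Ioi 0), x * f x / F x < 2 :=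
      hlim.eventually_lt_const hω2
    -- derivative of g
    have hgder : ∀ x : ℝ, 0 < x → HasDerivAt (fun x => x * (F x) ^ (-(1:ℝ)/2))
        ((F x) ^ (-(1:ℝ)/2) * (1 - x * f x / F x / 2)) x := by
      intro x hx
      have hd := (hasDerivAt_id x).mul ((hFder x).rpow_const (p := -(1:ℝ)/2) (Or.inl (hFpos x hx).ne'))
      refine hd.congr_deriv ?_
      symm
      simp only [id]
      have hFx := hFpos x hx
      have h32 : (F x) ^ (-(1:ℝ)/2 - 1) = (F x) ^ (-(1:ℝ)/2) * (F x)⁻¹ := by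
        rw [show (-(1:ℝ)/2 - 1) = -(1:ℝ)/2 + (-1) by ring, Real.rpow_add hFx,
          Real.rpow_neg_one]
      rw [h32]
      field_simp
      ring
    have hff' : ∀ᶠ x in nhdsWithin 0 (Set.Ioi 0),
        HasDerivAt h ((F x) ^ (-(1:ℝ)/2)) x := by
      filter_upwards [self_mem_nhdsWithin] with x hx
      exact hhder x hx
    have hgg' : ∀ᶠ x in nhdsWithin 0 (Set.Ioi 0),
        HasDerivAt (fun x => x * (F x) ^ (-(1:ℝ)/2))
          ((F x) ^ (-(1:ℝ)/2) * (1 - x * f x / F x / 2)) x := by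
      filter_upwards [self_mem_nhdsWithin] with x hx
      exact hgder x hx
    have hg'ne : ∀ᶠ x in nhdsWithin 0 (Set.Ioi 0),
        (F x) ^ (-(1:ℝ)/2) * (1 - x * f x / F x / 2) ≠ 0 := by
      filter_upwards [hev2, self_mem_nhdsWithin] with x hx2 hx
      have h1 : (0:ℝ) < (F x) ^ (-(1:ℝ)/2) := Real.rpow_pos_of_pos (hFpos x hx) _
      have h2 : (0:ℝ) < 1 - x * f x / F x / 2 := by linarith
      positivity
    have hdiv : Tendsto (fun x => (F x) ^ (-(1:ℝ)/2) /
        ((F x) ^ (-(1:ℝ)/2) * (1 - x * f x / F x / 2)))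
        (nhdsWithin 0 (Set.Ioi 0)) (nhds (2 / (2 - ω))) := by
      have hden : Tendsto (fun x => 1 - x * f x / F x / 2) (nhdsWithin 0 (Set.Ioi 0))
          (nhds (1 - ω / 2)) := by
        have := hlim.div_const 2
        have := (tendsto_const_nhds (x := (1:ℝ))).sub this
        exact this
      have hne : (1:ℝ) - ω / 2 ≠ 0 := by
        intro hc; linarith [(by linarith : ω = 2)]
      have hmain : Tendsto (fun x => 1 / (1 - x * f x / F x / 2)) (nhdsWithin 0 (Set.Ioi 0))
          (nhds (1 / (1 - ω / 2))) := (tendsto_const_nhds).div hden hne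
      have hval : 1 / (1 - ω / 2) = 2 / (2 - ω) := by
        rw [div_eq_div_iff (by linarith) (by linarith)]; ring
      rw [hval] at hmain
      refine hmain.congr' ?_
      filter_upwards [self_mem_nhdsWithin] with x hx
      have h1 : ((F x) ^ (-(1:ℝ)/2)) ≠ 0 := (Real.rpow_pos_of_pos (hFpos x hx) _).ne'
      rw [div_mul_cancel_left₀ h1, one_div]
    exact HasDerivAt.lhopital_zero_nhdsGT hff' hgg' hg'ne hh0 hg0 hdiv
  -- combine
  have hfinal : Tendsto (fun t => (t * f t / F t) * (h t / (t * (F t) ^ (-(1:ℝ)/2))))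
      (nhdsWithin 0 (Set.Ioi 0)) (nhds (ω * (2 / (2 - ω)))) := hlim.mul hlhop
  have hval2 : ω * (2 / (2 - ω)) = 2 * ω / (2 - ω) := by ring
  rw [hval2] at hfinal
  refine hfinal.congr' ?_
  filter_upwards [self_mem_nhdsWithin] with t ht
  have hFt := hFpos t ht
  have hsq : Real.sqrt (F t) = F t * (F t) ^ (-(1:ℝ)/2) := by
    rw [Real.sqrt_eq_rpow]
    nth_rewrite 2 [← Real.rpow_one (F t)]
    rw [← Real.rpow_add hFt]
    norm_num
  have h1 : ((F t) ^ (-(1:ℝ)/2)) ≠ 0 := (Real.rpow_pos_of_pos hFt _).ne'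
  have ht0 : (0:ℝ) < t := ht
  have hne1 : F t * (F t) ^ (-(1:ℝ)/2) ≠ 0 :=
    (mul_pos hFt (Real.rpow_pos_of_pos hFt _)).ne'
  have hne2 : F t * (t * (F t) ^ (-(1:ℝ)/2)) ≠ 0 :=
    (mul_pos hFt (mul_pos ht0 (Real.rpow_pos_of_pos hFt _))).ne'
  rw [hsq]
  field_simp [ht0.ne', hFt.ne', h1]
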